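/- arXiv:1507.01418 — 4 statements merged into one kernel-verified Lean document; each statement's English description precedes it below -/
import Mathlib

section
/- Let Ω be a nonempty closed convex subset of ℂ. Then at least one of the following holds: (1) Ω = ℂ; (2) Ω is a closed half plane, i.e. there exist θ, ω ∈ ℝ with Ω = {z ∈ ℂ : Re(e^{-iθ}z) ≤ ω}; (3) Ω is contained in a sector, i.e. there exist θ ∈ ℝ, δ with 0 < δ < π/2, and z₀ ∈ ℂ with Ω ⊆ {z₀ + e^{-iθ}λ : λ ∈ ℂ, |arg λ| ≤ δ}; (4) Ω is contained in a strip, i.e. there exist θ ∈ ℝ and real numbers ω₁ ≤ ω₂ with Ω ⊆ {z ∈ ℂ : ω₁ ≤ Re(e^{iθ}z) ≤ ω₂}; (5) Ω is compact. -/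
open Complex

/-- Separation: a point outside a closed convex set is strictly separated by a
functional of the form `z ↦ (conj w * z).re`. -/
lemma sep_aux (Ω : Set ℂ) (hclosed : IsClosed Ω) (hconv : Convex ℝ Ω) {p : ℂ} (hp : p ∉ Ω) :
    ∃ (w : ℂ) (c : ℝ), (∀ z ∈ Ω, ((starRingEnd ℂ) w * z).re < c) ∧
      c < ((starRingEnd ℂ) w * p).re := by
  obtain ⟨f, c, hf, hp'⟩ := geometric_hahn_banach_closed_point hconv hclosed hp
  have key : ∀ z : ℂ, ((starRingEnd ℂ) ((f 1 : ℝ) + (f I : ℝ) * I) * z).re = f z := by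
    intro z
    have hz : f z = z.re * f 1 + z.im * f I := by
      conv_lhs => rw [← Complex.re_add_im z]
      rw [show (z.re : ℂ) + (z.im : ℂ) * I = z.re • (1 : ℂ) + z.im • I by
        simp [Complex.real_smul], map_add, map_smul, map_smul]
      simp [smul_eq_mul]
    rw [hz]
    simp [Complex.mul_re, Complex.add_re, Complex.add_im, Complex.mul_im]
    ring
  exact ⟨(f 1 : ℝ) + (f I : ℝ) * I, c, fun z hz => (key z).symm ▸ hf z hz, (key p).symm ▸ hp'⟩

/-- Core estimate: if `sin ψ * |Im μ| ≤ cos ψ * Re μ` with `0 < ψ < π/2`,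
then `|arg μ| ≤ π/2 - ψ`. -/
lemma arg_aux {μ : ℂ} {ψ : ℝ} (h0 : 0 < ψ) (h2 : ψ < Real.pi / 2)
    (h : Real.sin ψ * |μ.im| ≤ Real.cos ψ * μ.re) :
    |Complex.arg μ| ≤ Real.pi / 2 - ψ := by
  have hs : 0 < Real.sin ψ := Real.sin_pos_of_pos_of_lt_pi h0 (by linarith [Real.pi_pos])
  have hc : 0 < Real.cos ψ := Real.cos_pos_of_mem_Ioo ⟨by linarith, h2⟩
  rcases eq_or_ne μ 0 with rfl | hμ
  · simp [Complex.arg_zero]; linarith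
  · have habs : 0 < ‖μ‖ := norm_pos_iff.mpr hμ
    have hre : 0 ≤ μ.re := by nlinarith [abs_nonneg μ.im]
    have hkey : Real.sin ψ * ‖μ‖ ≤ μ.re := by
      have hsq : (‖μ‖) ^ 2 = μ.re ^ 2 + μ.im ^ 2 := by
        rw [Complex.sq_norm, Complex.normSq_apply]; ring
      nlinarith [mul_self_le_mul_self (by positivity : (0:ℝ) ≤ Real.sin ψ * |μ.im|) h,
        Real.sin_sq_add_cos_sq ψ, _root_.sq_abs μ.im, hre,
        mul_nonneg hs.le (norm_nonneg μ)]
    have h1 : |Complex.arg μ| ≤ Real.pi / 2 := Complex.abs_arg_le_pi_div_two_iff.mpr hre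
    by_contra hcon
    push_neg at hcon
    have hmem1 : |Complex.arg μ| ∈ Set.Icc 0 Real.pi :=
      ⟨abs_nonneg _, h1.trans (by linarith [Real.pi_pos])⟩
    have hmem2 : Real.pi / 2 - ψ ∈ Set.Icc 0 Real.pi :=
      ⟨by linarith, by linarith [Real.pi_pos]⟩
    have := Real.strictAntiOn_cos hmem2 hmem1 hcon
    rw [Real.cos_abs, Complex.cos_arg hμ, Real.cos_pi_div_two_sub] at this
    rw [div_lt_iff₀ habs] at this
    linarith

lemma exp_neg_real_mul_I (a : ℝ) :
    Complex.exp (-(a : ℂ) * Complex.I) = (starRingEnd ℂ) (Complex.exp ((a : ℂ) * Complex.I)) := by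
  rw [← Complex.exp_conj, map_mul, Complex.conj_ofReal, Complex.conj_I]
  ring_nf

/-- If `Ω` lies in a wedge (intersection of two half planes with normals `u*t` and
`u*conj t`, `|u| = |t| = 1`, `0 < arg t < π/2`), it lies in a sector. -/
lemma sector_core (Ω : Set ℂ) (u t : ℂ) (hu : ‖u‖ = 1) (ht : ‖t‖ = 1)
    (h0 : 0 < t.arg) (h2 : t.arg < Real.pi / 2) (c₁ c₂ : ℝ)
    (hb₁ : ∀ z ∈ Ω, ((starRingEnd ℂ) (u * t) * z).re ≤ c₁)
    (hb₂ : ∀ z ∈ Ω, ((starRingEnd ℂ) (u * (starRingEnd ℂ) t) * z).re ≤ c₂) :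
    ∃ θ δ : ℝ, 0 < δ ∧ δ < Real.pi / 2 ∧ ∃ z₀ : ℂ,
      Ω ⊆ {z : ℂ | ∃ lam : ℂ,
        |Complex.arg lam| ≤ δ ∧ z = z₀ + Complex.exp (-(θ : ℂ) * Complex.I) * lam} := by
  set ψ := t.arg with hψ
  have hsψ : 0 < Real.sin ψ := Real.sin_pos_of_pos_of_lt_pi h0 (by linarith [Real.pi_pos])
  have hcψ : 0 < Real.cos ψ := Real.cos_pos_of_mem_Ioo ⟨by linarith, h2⟩
  have htne : t ≠ 0 := by intro h; rw [h] at ht; simp at ht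
  have hune : u ≠ 0 := by intro h; rw [h] at hu; simp at hu
  have htre : t.re = Real.cos ψ := by
    have := Complex.cos_arg htne; rw [ht, div_one] at this; exact this.symm
  have htim : t.im = Real.sin ψ := by
    have := Complex.sin_arg t; rw [ht, div_one] at this; exact this.symm
  have huu : u * (starRingEnd ℂ) u = 1 := by
    rw [Complex.mul_conj]; norm_cast; rw [Complex.normSq_eq_norm_sq, hu]; norm_num
  set v : ℂ := ((c₁ + c₂) / (2 * Real.cos ψ) : ℝ) + ((c₁ - c₂) / (2 * Real.sin ψ) : ℝ) * I
    with hv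
  have hvre : v.re = (c₁ + c₂) / (2 * Real.cos ψ) := by simp [hv, -Complex.ofReal_div]
  have hvim : v.im = (c₁ - c₂) / (2 * Real.sin ψ) := by simp [hv, -Complex.ofReal_div]
  have hv1 : Real.cos ψ * v.re + Real.sin ψ * v.im = c₁ := by
    rw [hvre, hvim]; field_simp; ring
  have hv2 : Real.cos ψ * v.re - Real.sin ψ * v.im = c₂ := by
    rw [hvre, hvim]; field_simp; ring
  refine ⟨-(u.arg + Real.pi), Real.pi / 2 - ψ, by linarith, by linarith, u * v, ?_⟩
  intro z hz
  set lam := v - (starRingEnd ℂ) u * z with hlam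
  have hA : Real.cos ψ * ((starRingEnd ℂ) u * z).re
      + Real.sin ψ * ((starRingEnd ℂ) u * z).im ≤ c₁ := by
    have := hb₁ z hz
    rw [map_mul] at this
    have hrw : (starRingEnd ℂ) u * (starRingEnd ℂ) t * z
        = (starRingEnd ℂ) t * ((starRingEnd ℂ) u * z) := by ring
    rw [hrw, Complex.mul_re, Complex.conj_re, Complex.conj_im, htre, htim] at this
    linarith
  have hB : Real.cos ψ * ((starRingEnd ℂ) u * z).re
      - Real.sin ψ * ((starRingEnd ℂ) u * z).im ≤ c₂ := by
    have := hb₂ z hz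
    rw [map_mul, Complex.conj_conj] at this
    have hrw : (starRingEnd ℂ) u * t * z = t * ((starRingEnd ℂ) u * z) := by ring
    rw [hrw, Complex.mul_re, htre, htim] at this
    linarith
  have hlamre : lam.re = v.re - ((starRingEnd ℂ) u * z).re := by simp [hlam]
  have hlamim : lam.im = v.im - ((starRingEnd ℂ) u * z).im := by simp [hlam]
  have harg : |Complex.arg lam| ≤ Real.pi / 2 - ψ := by
    apply arg_aux h0 h2
    rcases abs_cases lam.im with ⟨he, _⟩ | ⟨he, _⟩ <;> rw [he, hlamre, hlamim] <;> linarith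
  refine ⟨lam, harg, ?_⟩
  have hexp : Complex.exp (-(((-(u.arg + Real.pi)) : ℝ) : ℂ) * Complex.I) = -u := by
    push_cast
    rw [neg_neg, add_mul, Complex.exp_add, Complex.exp_pi_mul_I]
    have := Complex.norm_mul_exp_arg_mul_I u
    rw [hu] at this; push_cast at this; rw [one_mul] at this
    rw [this]; ring
  rw [hexp, hlam]
  linear_combination (-z) * huu

/-- Every nonempty closed convex subset of `ℂ` is the whole plane, a closed half plane,
contained in a sector, contained in a strip, or compact. -/
theorem closed_convex_classification (Ω : Set ℂ) (hne : Ω.Nonempty)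
    (hclosed : IsClosed Ω) (hconv : Convex ℝ Ω) :
    Ω = Set.univ ∨
      (∃ θ ω : ℝ, Ω = {z : ℂ | (Complex.exp (-(θ : ℂ) * Complex.I) * z).re ≤ ω}) ∨
      (∃ θ δ : ℝ, 0 < δ ∧ δ < Real.pi / 2 ∧ ∃ z₀ : ℂ,
        Ω ⊆ {z : ℂ | ∃ lam : ℂ,
          |Complex.arg lam| ≤ δ ∧ z = z₀ + Complex.exp (-(θ : ℂ) * Complex.I) * lam}) ∨
      (∃ θ : ℝ, ∃ ω₁ ω₂ : ℝ, ω₁ ≤ ω₂ ∧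
        Ω ⊆ {z : ℂ | ω₁ ≤ (Complex.exp ((θ : ℂ) * Complex.I) * z).re ∧
          (Complex.exp ((θ : ℂ) * Complex.I) * z).re ≤ ω₂}) ∨
      IsCompact Ω := by
  classical
  obtain ⟨a, ha⟩ := hne
  by_cases hW : ∃ w : ℂ, w ≠ 0 ∧ ∃ c : ℝ, ∀ z ∈ Ω, ((starRingEnd ℂ) w * z).re ≤ c
  swap
  · -- no bounded direction : Ω = ℂ
    left
    ext p
    simp only [Set.mem_univ, iff_true]
    by_contra hp
    obtain ⟨w, c, hsep1, hsep2⟩ := sep_aux Ω hclosed hconv hp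
    have hwne : w ≠ 0 := by
      rintro rfl
      have h1 := hsep1 a ha
      simp only [map_zero, zero_mul, Complex.zero_re] at h1 hsep2
      linarith
    exact hW ⟨w, hwne, c, fun z hz => (hsep1 z hz).le⟩
  obtain ⟨w₀, hw₀, c₀, hc₀⟩ := hW
  have hr₀ : 0 < ‖w₀‖ := norm_pos_iff.mpr hw₀
  -- the basic functional identity
  have hkey : ∀ z : ℂ, (Complex.exp (-((Complex.arg w₀ : ℝ) : ℂ) * Complex.I) * z).re
      = ((starRingEnd ℂ) w₀ * z).re / ‖w₀‖ := by
    intro z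
    rw [exp_neg_real_mul_I]
    have hw : Complex.exp ((Complex.arg w₀ : ℂ) * Complex.I) = w₀ / (‖w₀‖ : ℂ) := by
      rw [eq_div_iff (Complex.ofReal_ne_zero.mpr hr₀.ne'), mul_comm]
      exact Complex.norm_mul_exp_arg_mul_I w₀
    rw [hw, map_div₀, Complex.conj_ofReal, div_mul_eq_mul_div, Complex.div_ofReal_re]
  by_cases hStrip : ∃ c', ∀ z ∈ Ω, ((starRingEnd ℂ) (-w₀) * z).re ≤ c'
  · -- strip
    right; right; right; left
    obtain ⟨c', hc'⟩ := hStrip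
    refine ⟨-(Complex.arg w₀), -c' / ‖w₀‖, c₀ / ‖w₀‖, ?_, ?_⟩
    · have h1 := hc₀ a ha
      have h2 := hc' a ha
      rw [map_neg, neg_mul, Complex.neg_re] at h2
      rw [div_le_div_iff_of_pos_right hr₀]
      linarith
    · intro z hz
      have h1 := hc₀ z hz
      have h2 := hc' z hz
      rw [map_neg, neg_mul, Complex.neg_re] at h2
      have hre : (Complex.exp (((-(Complex.arg w₀) : ℝ) : ℂ) * Complex.I) * z).re
          = ((starRingEnd ℂ) w₀ * z).re / ‖w₀‖ := by
        rw [show (((-(Complex.arg w₀) : ℝ)) : ℂ) = -((Complex.arg w₀ : ℝ) : ℂ) by push_cast; ring]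
        exact hkey z
      rw [Set.mem_setOf_eq, hre]
      constructor
      · rw [div_le_div_iff_of_pos_right hr₀] ; linarith
      · rw [div_le_div_iff_of_pos_right hr₀] ; linarith
  by_cases hray : ∀ w : ℂ,
      (∃ c : ℝ, ∀ z ∈ Ω, ((starRingEnd ℂ) w * z).re ≤ c) → ∃ r : ℝ, w = (r : ℂ) * w₀
  · -- half plane
    right; left
    set g : ℂ → ℝ := fun z => ((starRingEnd ℂ) w₀ * z).re / ‖w₀‖ with hg
    have hbdd : BddAbove (g '' Ω) := by
      refine ⟨c₀ / ‖w₀‖, ?_⟩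
      rintro x ⟨z, hz, rfl⟩
      exact (div_le_div_iff_of_pos_right hr₀).mpr (hc₀ z hz)
    refine ⟨Complex.arg w₀, sSup (g '' Ω), ?_⟩
    ext p
    simp only [Set.mem_setOf_eq]
    rw [hkey p]
    constructor
    · intro hp
      exact le_csSup hbdd ⟨p, hp, rfl⟩
    · intro hp
      by_contra hpmem
      obtain ⟨w, c, hsep1, hsep2⟩ := sep_aux Ω hclosed hconv hpmem
      have hwne : w ≠ 0 := by
        rintro rfl
        have h1 := hsep1 a ha
        simp only [map_zero, zero_mul, Complex.zero_re] at h1 hsep2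
        linarith
      obtain ⟨r₁, hr₁⟩ := hray w ⟨c, fun z hz => (hsep1 z hz).le⟩
      have hr₁ne : r₁ ≠ 0 := by
        rintro rfl
        simp only [Complex.ofReal_zero, zero_mul] at hr₁
        exact hwne hr₁
      have hwre : ∀ z : ℂ, ((starRingEnd ℂ) w * z).re = r₁ * ((starRingEnd ℂ) w₀ * z).re := by
        intro z
        rw [hr₁, map_mul, Complex.conj_ofReal, mul_assoc]
        simp [Complex.mul_re]
      rcases hr₁ne.lt_or_gt with hneg | hpos
      · -- r₁ < 0 : then -w₀ is bounded above, contradiction with hStrip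
        apply hStrip
        refine ⟨-r₁⁻¹ * c, fun z hz => ?_⟩
        have h1 := (hsep1 z hz).le
        rw [hwre z] at h1
        rw [map_neg, neg_mul, Complex.neg_re]
        have hinvneg : r₁⁻¹ < 0 := inv_lt_zero.mpr hneg
        calc -((starRingEnd ℂ) w₀ * z).re
            = -r₁⁻¹ * (r₁ * ((starRingEnd ℂ) w₀ * z).re) := by
              field_simp
          _ ≤ -r₁⁻¹ * c := by
              apply mul_le_mul_of_nonneg_left h1 (by linarith)
      · -- r₁ > 0
        have hle : sSup (g '' Ω) ≤ c / (r₁ * ‖w₀‖) := by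
          apply csSup_le (Set.Nonempty.image g ⟨a, ha⟩)
          rintro x ⟨z, hz, rfl⟩
          have h1 := (hsep1 z hz).le
          rw [hwre z] at h1
          have h2 : ((starRingEnd ℂ) w₀ * z).re ≤ c / r₁ := (le_div_iff₀' hpos).mpr h1
          calc g z ≤ (c / r₁) / ‖w₀‖ := (div_le_div_iff_of_pos_right hr₀).mpr h2
          _ = c / (r₁ * ‖w₀‖) := div_div c r₁ _
        have hlt : c / (r₁ * ‖w₀‖) < g p := by
          have h2 := hsep2
          rw [hwre p] at h2
          rw [hg]
          dsimp only
          rw [div_lt_div_iff₀ (by positivity) hr₀]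
          nlinarith [hr₀, h2]
        linarith
  · -- sector
    right; right; left
    push_neg at hray
    obtain ⟨w₁, hb₁, hind⟩ := hray
    obtain ⟨c₁, hc₁⟩ := hb₁
    have hw₁ : w₁ ≠ 0 := by
      rintro rfl
      exact hind 0 (by simp)
    have hr₁ : 0 < ‖w₁‖ := norm_pos_iff.mpr hw₁
    set u₁ : ℂ := w₀ / (‖w₀‖ : ℂ) with hu₁
    set u₂ : ℂ := w₁ / (‖w₁‖ : ℂ) with hu₂
    have habs₁ : ‖u₁‖ = 1 := by
      rw [hu₁, norm_div, Complex.norm_real, Real.norm_eq_abs, abs_of_pos hr₀, div_self hr₀.ne']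
    have habs₂ : ‖u₂‖ = 1 := by
      rw [hu₂, norm_div, Complex.norm_real, Real.norm_eq_abs, abs_of_pos hr₁, div_self hr₁.ne']
    have hind' : ∀ r : ℝ, u₂ ≠ (r : ℂ) * u₁ := by
      intro r h
      apply hind (r * ‖w₁‖ / ‖w₀‖)
      rw [hu₂, hu₁] at h
      have hne0 : ((‖w₀‖ : ℝ) : ℂ) ≠ 0 := Complex.ofReal_ne_zero.mpr hr₀.ne'
      have hne1 : ((‖w₁‖ : ℝ) : ℂ) ≠ 0 := Complex.ofReal_ne_zero.mpr hr₁.ne'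
      push_cast
      field_simp at h ⊢
      linear_combination h
    set s : ℂ := u₁ + u₂ with hs
    have hsne : s ≠ 0 := by
      intro h
      apply hind' (-1)
      push_cast
      linear_combination h
    have hρ : 0 < ‖s‖ := norm_pos_iff.mpr hsne
    set u : ℂ := s / (‖s‖ : ℂ) with hu
    have habsu : ‖u‖ = 1 := by
      rw [hu, norm_div, Complex.norm_real, Real.norm_eq_abs, abs_of_pos hρ, div_self hρ.ne']
    have huu : u * (starRingEnd ℂ) u = 1 := by
      rw [Complex.mul_conj]
      norm_cast
      rw [Complex.normSq_eq_norm_sq, habsu]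
      norm_num
    set t : ℂ := (starRingEnd ℂ) u * u₁ with htdef
    have habst : ‖t‖ = 1 := by
      rw [htdef, norm_mul, Complex.norm_conj, habsu, habs₁, one_mul]
    have hut : u * t = u₁ := by
      rw [htdef]
      linear_combination u₁ * huu
    have hcs : (starRingEnd ℂ) u * s = (‖s‖ : ℂ) := by
      rw [hu, map_div₀, Complex.conj_ofReal, div_mul_eq_mul_div]
      rw [show (starRingEnd ℂ) s * s = ((Complex.normSq s : ℝ) : ℂ) by
        rw [mul_comm, Complex.mul_conj]]
      rw [Complex.normSq_eq_norm_sq]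
      push_cast
      rw [div_eq_iff (Complex.ofReal_ne_zero.mpr hρ.ne')]
      ring
    have h2 : (starRingEnd ℂ) u * u₂ = (‖s‖ : ℂ) - t := by
      have : u₂ = s - u₁ := by rw [hs]; ring
      rw [this, mul_sub, hcs, htdef]
    have habs2 : ‖((‖s‖ : ℂ) - t)‖ = 1 := by
      rw [← h2, norm_mul, Complex.norm_conj, habsu, habs₂, one_mul]
    have htre2 : t.re = ‖s‖ / 2 := by
      have e1 : Complex.normSq ((‖s‖ : ℂ) - t) = 1 := by
        rw [← Complex.sq_norm, habs2]; norm_num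
      have e2 : Complex.normSq t = 1 := by
        rw [← Complex.sq_norm, habst]; norm_num
      rw [Complex.normSq_apply] at e1 e2
      simp only [Complex.sub_re, Complex.ofReal_re, Complex.sub_im, Complex.ofReal_im,
        zero_sub] at e1
      nlinarith [hρ]
    have hconjt : (starRingEnd ℂ) u * u₂ = (starRingEnd ℂ) t := by
      rw [h2]
      apply Complex.ext
      · simp only [Complex.sub_re, Complex.ofReal_re, Complex.conj_re, htre2]
        ring
      · simp [Complex.sub_im, Complex.ofReal_im, Complex.conj_im]
    have hu₂eq : u₂ = u * (starRingEnd ℂ) t := by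
      linear_combination u * hconjt - u₂ * huu
    have htne1 : t ≠ 1 := by
      intro h1
      apply hind' 1
      have hu₁u : u₁ = u := by
        rw [← hut, h1, mul_one]
      have hu₂u : u₂ = u := by
        rw [hu₂eq, h1, map_one, mul_one]
      rw [hu₁u, hu₂u]
      push_cast
      ring
    have htrepos : 0 < t.re := by rw [htre2]; positivity
    have harglt : |t.arg| < Real.pi / 2 :=
      Complex.abs_arg_lt_pi_div_two_iff.mpr (Or.inl htrepos)
    have hargne : t.arg ≠ 0 := by
      intro h0
      apply htne1
      have := Complex.norm_mul_exp_arg_mul_I t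
      rw [habst, h0] at this
      simpa using this.symm
    have hbu₁ : ∀ z ∈ Ω, ((starRingEnd ℂ) u₁ * z).re ≤ c₀ / ‖w₀‖ := by
      intro z hz
      rw [hu₁, map_div₀, Complex.conj_ofReal, div_mul_eq_mul_div, Complex.div_ofReal_re]
      exact (div_le_div_iff_of_pos_right hr₀).mpr (hc₀ z hz)
    have hbu₂ : ∀ z ∈ Ω, ((starRingEnd ℂ) u₂ * z).re ≤ c₁ / ‖w₁‖ := by
      intro z hz
      rw [hu₂, map_div₀, Complex.conj_ofReal, div_mul_eq_mul_div, Complex.div_ofReal_re]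
      exact (div_le_div_iff_of_pos_right hr₁).mpr (hc₁ z hz)
    rcases hargne.lt_or_gt with hneg | hpos
    · -- arg t < 0 : use conj t, swapping the two bounds
      have hargc : ((starRingEnd ℂ) t).arg = -t.arg := by
        rw [Complex.arg_conj, if_neg]
        intro h
        rw [h] at harglt
        rw [abs_of_pos Real.pi_pos] at harglt
        linarith [Real.pi_pos]
      apply sector_core Ω u ((starRingEnd ℂ) t) habsu
        (by rw [Complex.norm_conj]; exact habst)
        (by rw [hargc]; linarith)
        (by rw [hargc]; rcases abs_lt.mp harglt with ⟨hl, _⟩; linarith)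
        (c₁ / ‖w₁‖) (c₀ / ‖w₀‖)
      · intro z hz
        rw [← hu₂eq]
        exact hbu₂ z hz
      · intro z hz
        rw [Complex.conj_conj, hut]
        exact hbu₁ z hz
    · apply sector_core Ω u t habsu habst hpos
        (by rcases abs_lt.mp harglt with ⟨_, hr⟩; exact hr)
        (c₀ / ‖w₀‖) (c₁ / ‖w₁‖)
      · intro z hz
        rw [hut]
        exact hbu₁ z hz
      · intro z hz
        rw [← hu₂eq]
        exact hbu₂ z hz
end

section
/- Let 1 < p < ∞ and let X = ℂ² be equipped with the ℓ^p norm ‖(x₁, x₂)‖_p = (|x₁|^p + |x₂|^p)^{1/p}. Let A be the bounded linear operator on X given by the matrix [[0, 1], [0, 0]], i.e. A(x₁, x₂) = (x₂, 0). Then the numerical spectrum of A is the closed disk centered at 0 of radius ((p−1)/p)^{1−1/p}·(1/p)^{1/p}, i.e. σ_n(A) = {λ ∈ ℂ : |λ| ≤ ((p−1)/p)^{1−1/p}·(1/p)^{1/p}}. -/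
open Complex

variable {X : Type*} [NormedAddCommGroup X] [NormedSpace ℂ X] [CompleteSpace X]

/-- The open half plane `H_{θ,ω}`, the rotation by the angle `θ` of `{z | Re z > ω}`. -/
def halfPlane (θ ω : ℝ) : Set ℂ :=
  {z : ℂ | ω < (Complex.exp (-(θ : ℂ) * Complex.I) * z).re}

/-- The numerical resolvent set of a bounded operator `A` : the union of all open half
planes `H_{θ,ω}` contained in the resolvent set of `A` on which
`‖R(z, A)‖ ≤ 1 / dist(z, ∂H_{θ,ω}) = 1 / (Re (e^{-iθ} z) - ω)`. -/
noncomputable def numResolventSet (A : X →L[ℂ] X) : Set ℂ :=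
  {z : ℂ | ∃ θ ω : ℝ, z ∈ halfPlane θ ω ∧ halfPlane θ ω ⊆ resolventSet ℂ A ∧
    ∀ w ∈ halfPlane θ ω,
      ‖resolvent A w‖ ≤ 1 / ((Complex.exp (-(θ : ℂ) * Complex.I) * w).re - ω)}

/-- The numerical spectrum of a bounded operator `A`. -/
noncomputable def numSpectrum (A : X →L[ℂ] X) : Set ℂ := (numResolventSet A)ᶜ

/-- The duality set `J(x)` of a vector `x`. -/
noncomputable def dualitySet (x : X) : Set (X →L[ℂ] ℂ) :=
  {j | j x = (‖x‖ ^ 2 : ℝ) ∧ ‖j‖ = ‖x‖}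

section Aux

variable {p : ℝ}

private lemma rconst_pos (hp : 1 < p) :
    0 < ((p - 1) / p) ^ (1 - 1 / p) * (1 / p) ^ (1 / p) := by
  have hp0 : 0 < p := lt_trans one_pos hp
  exact mul_pos (Real.rpow_pos_of_pos (div_pos (by linarith) hp0) _)
    (Real.rpow_pos_of_pos (by positivity) _)

private lemma young2 (hp : 1 < p) {u v : ℝ} (hu : 0 ≤ u) (hv : 0 ≤ v) :
    u ^ (p - 1) * v ≤ (((p - 1) / p) ^ (1 - 1 / p) * (1 / p) ^ (1 / p)) * (u ^ p + v ^ p) := by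
  have hp0 : 0 < p := lt_trans one_pos hp
  set w1 : ℝ := (p - 1) / p with hw1def
  set w2 : ℝ := 1 / p with hw2def
  have hw1 : 0 < w1 := div_pos (by linarith) hp0
  have hw2 : 0 < w2 := by positivity
  have hsum : w1 + w2 = 1 := by rw [hw1def, hw2def]; field_simp; ring
  have hexp : (1 : ℝ) - 1 / p = w1 := by rw [hw1def]; field_simp
  have h := Real.geom_mean_le_arith_mean2_weighted hw1.le hw2.le
    (div_nonneg (Real.rpow_nonneg hu p) hw1.le) (div_nonneg (Real.rpow_nonneg hv p) hw2.le) hsum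
  rw [mul_div_cancel₀ _ hw1.ne', mul_div_cancel₀ _ hw2.ne'] at h
  have e1 : (u ^ p / w1) ^ w1 = u ^ (p - 1) / w1 ^ w1 := by
    rw [Real.div_rpow (Real.rpow_nonneg hu p) hw1.le, ← Real.rpow_mul hu,
      show p * w1 = p - 1 by rw [hw1def]; field_simp]
  have e2 : (v ^ p / w2) ^ w2 = v / w2 ^ w2 := by
    rw [Real.div_rpow (Real.rpow_nonneg hv p) hw2.le, ← Real.rpow_mul hv]
    congr 2
    rw [hw2def]
    rw [mul_one_div, div_self hp0.ne']
    exact Real.rpow_one v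
  rw [e1, e2] at h
  have hw1p : 0 < w1 ^ w1 := Real.rpow_pos_of_pos hw1 _
  have hw2p : 0 < w2 ^ w2 := Real.rpow_pos_of_pos hw2 _
  rw [hexp]
  calc u ^ (p - 1) * v = (w1 ^ w1 * w2 ^ w2) * (u ^ (p - 1) / w1 ^ w1 * (v / w2 ^ w2)) := by
        field_simp
        try ring
    _ ≤ (w1 ^ w1 * w2 ^ w2) * (u ^ p + v ^ p) := by
        exact mul_le_mul_of_nonneg_left h (by positivity)

private lemma holder2 (hp : 1 < p) {a0 a1 b0 b1 : ℝ} (ha0 : 0 ≤ a0) (ha1 : 0 ≤ a1)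
    (hb0 : 0 ≤ b0) (hb1 : 0 ≤ b1) :
    a0 ^ (p - 1) * b0 + a1 ^ (p - 1) * b1 ≤
      (a0 ^ p + a1 ^ p) ^ (1 - 1 / p) * (b0 ^ p + b1 ^ p) ^ (1 / p) := by
  have hp0 : 0 < p := lt_trans one_pos hp
  have hpq : p.HolderConjugate (Real.conjExponent p) := Real.HolderConjugate.conjExponent hp
  set q := Real.conjExponent p with hqdef
  have hq0 : 0 < q := hpq.symm.pos
  have h := Real.inner_le_Lp_mul_Lq (s := Finset.univ)
    (f := ![a0 ^ (p - 1), a1 ^ (p - 1)]) (g := ![b0, b1]) hpq.symm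
  simp only [Fin.sum_univ_two, Matrix.cons_val_zero, Matrix.cons_val_one, Matrix.head_cons] at h
  rw [_root_.abs_of_nonneg (Real.rpow_nonneg ha0 _), _root_.abs_of_nonneg (Real.rpow_nonneg ha1 _),
    _root_.abs_of_nonneg hb0, _root_.abs_of_nonneg hb1, ← Real.rpow_mul ha0, ← Real.rpow_mul ha1,
    show (p - 1) * q = p from hpq.sub_one_mul_conj,
    show (1 : ℝ) / q = 1 - 1 / p by
      rw [one_div, one_div, ← hpq.one_sub_inv]] at h
  exact h

private lemma rpow_helper1 (hp : 1 < p) {u : ℝ} (hu : 0 ≤ u) :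
    u ^ (p - 2) * u = u ^ (p - 1) := by
  rcases eq_or_lt_of_le hu with h | h
  · rw [← h, mul_zero, Real.zero_rpow (by linarith : p - 1 ≠ 0)]
  · rw [show p - 1 = p - 2 + 1 by ring, Real.rpow_add_one h.ne']

private lemma rpow_helper2 (hp : 1 < p) {u : ℝ} (hu : 0 ≤ u) :
    u ^ (p - 2) * u ^ (2 : ℕ) = u ^ p := by
  rcases eq_or_lt_of_le hu with h | h
  · rw [← h, Real.zero_rpow (by linarith : p ≠ 0)]
    norm_num
  · rw [← Real.rpow_natCast u 2, ← Real.rpow_add h]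
    norm_num

private lemma estimate (hp : 1 < p) (θ : ℝ) (w x0 x1 : ℂ) :
    ((Complex.exp (-(θ : ℂ) * I) * w).re - ((p - 1) / p) ^ (1 - 1 / p) * (1 / p) ^ (1 / p)) *
        (‖x0‖ ^ p + ‖x1‖ ^ p) ≤
      (‖x0‖ ^ p + ‖x1‖ ^ p) ^ (1 - 1 / p) * (‖w * x0 - x1‖ ^ p + ‖w * x1‖ ^ p) ^ (1 / p) := by
  set R : ℝ := ((p - 1) / p) ^ (1 - 1 / p) * (1 / p) ^ (1 / p) with hRdef
  set e := Complex.exp (-(θ : ℂ) * I) with hedef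
  have he : ‖e‖ = 1 := by
    rw [hedef, show -(θ : ℂ) * I = ((-θ : ℝ) : ℂ) * I by push_cast; ring]
    exact Complex.norm_exp_ofReal_mul_I (-θ)
  set c0 : ℝ := ‖x0‖ ^ (p - 2) with hc0def
  set c1 : ℝ := ‖x1‖ ^ (p - 2) with hc1def
  have hc0 : 0 ≤ c0 := Real.rpow_nonneg (norm_nonneg _) _
  have hc1 : 0 ≤ c1 := Real.rpow_nonneg (norm_nonneg _) _
  set y0 : ℂ := w * x0 - x1 with hy0def
  set y1 : ℂ := w * x1 with hy1def
  set T : ℂ := (c0 : ℂ) * (starRingEnd ℂ x0) * y0 + (c1 : ℂ) * (starRingEnd ℂ x1) * y1 with hTdef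
  set N : ℝ := ‖x0‖ ^ p + ‖x1‖ ^ p with hNdef
  have hN : 0 ≤ N := by positivity
  have e0 : (c0 : ℂ) * ((starRingEnd ℂ) x0 * x0) = ((‖x0‖ ^ p : ℝ) : ℂ) := by
    rw [mul_comm ((starRingEnd ℂ) x0) x0, Complex.mul_conj, ← Complex.sq_norm]
    push_cast
    rw [← rpow_helper2 hp (norm_nonneg x0)]
    push_cast
    ring
  have e1 : (c1 : ℂ) * ((starRingEnd ℂ) x1 * x1) = ((‖x1‖ ^ p : ℝ) : ℂ) := by
    rw [mul_comm ((starRingEnd ℂ) x1) x1, Complex.mul_conj, ← Complex.sq_norm]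
    push_cast
    rw [← rpow_helper2 hp (norm_nonneg x1)]
    push_cast
    ring
  have hT : e * T = (e * w) * ((N : ℝ) : ℂ) - e * ((c0 : ℂ) * (starRingEnd ℂ x0) * x1) := by
    rw [hTdef, hy0def, hy1def, hNdef]
    push_cast
    linear_combination (e * w) * e0 + (e * w) * e1
  have step1 : (e * w).re * N - ‖x0‖ ^ (p - 1) * ‖x1‖ ≤ (e * T).re := by
    rw [hT, Complex.sub_re, mul_comm (e * w) ((N : ℝ) : ℂ), Complex.re_ofReal_mul]
    have habs : (e * ((c0 : ℂ) * (starRingEnd ℂ x0) * x1)).re ≤ ‖x0‖ ^ (p - 1) * ‖x1‖ := by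
      refine le_trans (Complex.re_le_norm _) ?_
      rw [norm_mul, norm_mul, norm_mul, he, one_mul, Complex.norm_conj, Complex.norm_real,
        Real.norm_of_nonneg hc0,
        ← rpow_helper1 hp (norm_nonneg x0)]
    linarith [habs]
  have habs0 : ‖(c0 : ℂ) * (starRingEnd ℂ) x0 * y0‖ = c0 * ‖x0‖ * ‖y0‖ := by
    rw [norm_mul, norm_mul, Complex.norm_real, Real.norm_of_nonneg hc0, Complex.norm_conj]
  have habs1 : ‖(c1 : ℂ) * (starRingEnd ℂ) x1 * y1‖ = c1 * ‖x1‖ * ‖y1‖ := by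
    rw [norm_mul, norm_mul, Complex.norm_real, Real.norm_of_nonneg hc1, Complex.norm_conj]
  have step2 : (e * T).re ≤ N ^ (1 - 1 / p) * (‖y0‖ ^ p + ‖y1‖ ^ p) ^ (1 / p) := by
    refine le_trans (Complex.re_le_norm _) ?_
    rw [norm_mul, he, one_mul]
    calc ‖T‖ ≤ c0 * ‖x0‖ * ‖y0‖ + c1 * ‖x1‖ * ‖y1‖ := by
          rw [hTdef, ← habs0, ← habs1]
          exact norm_add_le _ _
      _ = ‖x0‖ ^ (p - 1) * ‖y0‖ + ‖x1‖ ^ (p - 1) * ‖y1‖ := by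
          rw [← rpow_helper1 hp (norm_nonneg x0), ← rpow_helper1 hp (norm_nonneg x1)]
      _ ≤ N ^ (1 - 1 / p) * (‖y0‖ ^ p + ‖y1‖ ^ p) ^ (1 / p) := by
          rw [hNdef]
          exact holder2 hp (norm_nonneg _) (norm_nonneg _) (norm_nonneg _) (norm_nonneg _)
  have step3 : ‖x0‖ ^ (p - 1) * ‖x1‖ ≤ R * N := by
    rw [hRdef, hNdef]
    exact young2 hp (norm_nonneg _) (norm_nonneg _)
  calc ((e * w).re - R) * N = (e * w).re * N - R * N := by ring
    _ ≤ (e * w).re * N - ‖x0‖ ^ (p - 1) * ‖x1‖ := by linarith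
    _ ≤ (e * T).re := step1
    _ ≤ N ^ (1 - 1 / p) * (‖y0‖ ^ p + ‖y1‖ ^ p) ^ (1 / p) := step2

private lemma deriv_le_of_le {f g : ℝ → ℝ} {r w ε : ℝ} (hε : 0 < ε)
    (hf : HasDerivAt f r 0) (hg : HasDerivAt g w 0) (h0 : f 0 = g 0)
    (h : ∀ s ∈ Set.Ioo (0 : ℝ) ε, f s ≤ g s) : r ≤ w := by
  have hsub : Set.Ioi (0 : ℝ) ⊆ {(0 : ℝ)}ᶜ := fun x hx => ne_of_gt hx
  have hf' : Filter.Tendsto (slope f 0) (nhdsWithin 0 (Set.Ioi 0)) (nhds r) :=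
    (hasDerivAt_iff_tendsto_slope.mp hf).mono_left (nhdsWithin_mono 0 hsub)
  have hg' : Filter.Tendsto (slope g 0) (nhdsWithin 0 (Set.Ioi 0)) (nhds w) :=
    (hasDerivAt_iff_tendsto_slope.mp hg).mono_left (nhdsWithin_mono 0 hsub)
  refine le_of_tendsto_of_tendsto hf' hg' ?_
  filter_upwards [Ioo_mem_nhdsGT_of_mem (Set.left_mem_Ico.mpr hε)] with s hs
  have hs0 : 0 < s := hs.1
  simp only [slope_def_field, div_eq_mul_inv]
  rw [sub_zero]
  have hfg : f s - f 0 ≤ g s - g 0 := by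
    rw [h0]
    have := h s hs
    linarith
  exact mul_le_mul_of_nonneg_right hfg (inv_nonneg.mpr hs0.le)

end Aux

section Op

variable {p : ℝ} [Fact (1 ≤ ENNReal.ofReal p)]

local notation "Xp" p => PiLp (ENNReal.ofReal p) (fun _ : Fin 2 => ℂ)

private lemma lower (hp : 1 < p)
    (A : (Xp p) →L[ℂ] (Xp p))
    (hA : ∀ x : Xp p, A x 0 = x 1 ∧ A x 1 = 0) (θ : ℝ) (w : ℂ) (x : Xp p) :
    ((Complex.exp (-(θ : ℂ) * I) * w).re - ((p - 1) / p) ^ (1 - 1 / p) * (1 / p) ^ (1 / p)) *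
      ‖x‖ ≤ ‖w • x - A x‖ := by
  have hp0 : 0 < p := lt_trans one_pos hp
  have htr : (ENNReal.ofReal p).toReal = p := ENNReal.toReal_ofReal hp0.le
  have hptr : 0 < (ENNReal.ofReal p).toReal := by rw [htr]; exact hp0
  rw [PiLp.norm_eq_sum hptr, PiLp.norm_eq_sum hptr]
  simp only [htr, Fin.sum_univ_two]
  have hy0 : (w • x - A x) 0 = w * x 0 - x 1 := by
    simp [(hA x).1]
  have hy1 : (w • x - A x) 1 = w * x 1 := by
    simp [(hA x).2]
  rw [hy0, hy1]
  set R : ℝ := ((p - 1) / p) ^ (1 - 1 / p) * (1 / p) ^ (1 / p) with hRdef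
  set c : ℝ := (Complex.exp (-(θ : ℂ) * I) * w).re - R with hcdef
  set N : ℝ := ‖x 0‖ ^ p + ‖x 1‖ ^ p with hNdef
  set V : ℝ := (‖w * x 0 - x 1‖ ^ p + ‖w * x 1‖ ^ p) ^ (1 / p) with hVdef
  have hV : 0 ≤ V := Real.rpow_nonneg (by positivity) _
  have hN : 0 ≤ N := by positivity
  have est : c * N ≤ N ^ (1 - 1 / p) * V := estimate hp θ w (x 0) (x 1)
  rcases eq_or_lt_of_le hN with h0 | h0
  · rw [← h0, Real.zero_rpow (by positivity : (1 : ℝ) / p ≠ 0), mul_zero]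
    exact hV
  · have h1 : 0 < N ^ (1 - 1 / p) := Real.rpow_pos_of_pos h0 _
    have hNe : N ^ (1 - 1 / p) * N ^ ((1 : ℝ) / p) = N := by
      rw [← Real.rpow_add h0]
      norm_num
    rw [← mul_le_mul_iff_right₀ h1, ← mul_assoc]
    calc N ^ (1 - 1 / p) * c * N ^ ((1 : ℝ) / p) = c * N := by
          rw [mul_comm (N ^ (1 - 1 / p)) c, mul_assoc, hNe]
      _ ≤ N ^ (1 - 1 / p) * V := est

private lemma resolvent_formula
    (A : (Xp p) →L[ℂ] (Xp p))
    (hA : ∀ x : Xp p, A x 0 = x 1 ∧ A x 1 = 0) {w : ℂ} (hw : w ≠ 0) :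
    w ∈ resolventSet ℂ A ∧
      resolvent A w = w⁻¹ • (1 : (Xp p) →L[ℂ] (Xp p)) + (w⁻¹ * w⁻¹) • A ∧
      ∀ y : Xp p, w • (resolvent A w y) - A (resolvent A w y) = y := by
  have hAA : ∀ x : Xp p, A (A x) = 0 := by
    intro x
    ext i
    fin_cases i
    · calc A (A x) 0 = (A x) 1 := (hA (A x)).1
        _ = 0 := (hA x).2
    · exact (hA (A x)).2
  set B : (Xp p) →L[ℂ] (Xp p) := w⁻¹ • (1 : (Xp p) →L[ℂ] (Xp p)) + (w⁻¹ * w⁻¹) • A with hBdef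
  have hww : w * (w⁻¹ * w⁻¹) = w⁻¹ := by field_simp
  have hww2 : w⁻¹ * w⁻¹ * w = w⁻¹ := by field_simp
  have h1 : (w • (1 : (Xp p) →L[ℂ] (Xp p)) - A) * B = 1 := by
    refine ContinuousLinearMap.ext fun y => ?_
    simp only [hBdef, ContinuousLinearMap.mul_apply, ContinuousLinearMap.sub_apply,
      ContinuousLinearMap.add_apply, ContinuousLinearMap.smul_apply,
      ContinuousLinearMap.one_apply, map_add, map_smul, hAA, smul_zero, smul_smul, smul_add,
      mul_inv_cancel₀ hw, hww, one_smul, add_zero]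
    match_scalars <;> field_simp <;> ring
  have h2 : B * (w • (1 : (Xp p) →L[ℂ] (Xp p)) - A) = 1 := by
    refine ContinuousLinearMap.ext fun y => ?_
    simp only [hBdef, ContinuousLinearMap.mul_apply, ContinuousLinearMap.sub_apply,
      ContinuousLinearMap.add_apply, ContinuousLinearMap.smul_apply,
      ContinuousLinearMap.one_apply, map_sub, map_smul, hAA, smul_zero, smul_smul, smul_sub,
      inv_mul_cancel₀ hw, hww2, one_smul, sub_zero]
    match_scalars <;> field_simp <;> ring
  have halg : algebraMap ℂ ((Xp p) →L[ℂ] (Xp p)) w = w • (1 : (Xp p) →L[ℂ] (Xp p)) :=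
    Algebra.algebraMap_eq_smul_one w
  set U : ((Xp p) →L[ℂ] (Xp p))ˣ :=
    ⟨w • (1 : (Xp p) →L[ℂ] (Xp p)) - A, B, h1, h2⟩ with hUdef
  have hmem : w ∈ resolventSet ℂ A := by
    rw [spectrum.mem_resolventSet_iff, halg]
    exact ⟨U, rfl⟩
  have hres : resolvent A w = B := by
    rw [resolvent, halg,
      show w • (1 : (Xp p) →L[ℂ] (Xp p)) - A = (U : (Xp p) →L[ℂ] (Xp p)) from rfl,
      Ring.inverse_unit]
    rfl
  refine ⟨hmem, hres, fun y => ?_⟩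
  have h3 := DFunLike.congr_fun h1 y
  simp only [ContinuousLinearMap.mul_apply, ContinuousLinearMap.sub_apply,
    ContinuousLinearMap.smul_apply, ContinuousLinearMap.one_apply] at h3
  rw [hres]
  exact h3

end Op

/-- The numerical spectrum of the nilpotent matrix `[[0,1],[0,0]]` on `(ℂ², ‖·‖_p)` for
`1 < p < ∞` is the closed disk of radius `((p-1)/p)^(1-1/p) · (1/p)^(1/p)` centered at `0`. -/
theorem numSpectrum_nilpotent_lp (p : ℝ) (hp : 1 < p) [Fact (1 ≤ ENNReal.ofReal p)]
    (A : PiLp (ENNReal.ofReal p) (fun _ : Fin 2 => ℂ) →L[ℂ]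
      PiLp (ENNReal.ofReal p) (fun _ : Fin 2 => ℂ))
    (hA : ∀ x : PiLp (ENNReal.ofReal p) (fun _ : Fin 2 => ℂ),
      A x 0 = x 1 ∧ A x 1 = 0) :
    numSpectrum A =
      {lam : ℂ | ‖lam‖ ≤ ((p - 1) / p) ^ (1 - 1 / p) * (1 / p) ^ (1 / p)} := by
  have hp0 : 0 < p := lt_trans one_pos hp
  have htr : (ENNReal.ofReal p).toReal = p := ENNReal.toReal_ofReal hp0.le
  have hptr : 0 < (ENNReal.ofReal p).toReal := by rw [htr]; exact hp0
  have hR : 0 < ((p - 1) / p) ^ (1 - 1 / p) * (1 / p) ^ (1 / p) := rconst_pos hp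
  set R : ℝ := ((p - 1) / p) ^ (1 - 1 / p) * (1 / p) ^ (1 / p) with hRdef
  ext z
  simp only [numSpectrum, Set.mem_compl_iff, Set.mem_setOf_eq]
  constructor
  · -- z ∉ numResolventSet → ‖z‖ ≤ R
    intro hz
    by_contra hzR
    push_neg at hzR
    apply hz
    refine ⟨z.arg, R, ?_, ?_, ?_⟩
    · show R < (Complex.exp (-(z.arg : ℂ) * I) * z).re
      have hz' : Complex.exp (-(z.arg : ℂ) * I) * z = (‖z‖ : ℂ) := by
        conv_lhs => rw [← Complex.norm_mul_exp_arg_mul_I z]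
        rw [← mul_assoc, mul_comm (Complex.exp _) ((‖z‖ : ℂ)), mul_assoc,
          ← Complex.exp_add]
        simp
      rw [hz', Complex.ofReal_re]
      exact hzR
    · intro w hw
      have hw0 : w ≠ 0 := by
        rintro rfl
        simp only [halfPlane, Set.mem_setOf_eq, mul_zero, Complex.zero_re] at hw
        linarith
      exact (resolvent_formula A hA hw0).1
    · intro w hw
      have hwre : R < (Complex.exp (-(z.arg : ℂ) * I) * w).re := hw
      have hw0 : w ≠ 0 := by
        rintro rfl
        simp only [halfPlane, Set.mem_setOf_eq, mul_zero, Complex.zero_re] at hw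
        linarith
      obtain ⟨hmem, hres, hsolve⟩ := resolvent_formula A hA hw0
      set c : ℝ := (Complex.exp (-(z.arg : ℂ) * I) * w).re - R with hcdef
      have hc : 0 < c := by rw [hcdef]; linarith
      refine ContinuousLinearMap.opNorm_le_bound _ (by positivity) fun y => ?_
      set x := resolvent A w y with hxdef
      have hlow := lower hp A hA z.arg w x
      rw [hsolve y, ← hRdef, ← hcdef] at hlow
      rw [one_div]
      calc ‖x‖ = c⁻¹ * (c * ‖x‖) := by rw [← mul_assoc, inv_mul_cancel₀ hc.ne', one_mul]
        _ ≤ c⁻¹ * ‖y‖ := mul_le_mul_of_nonneg_left hlow (inv_nonneg.mpr hc.le)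
  · -- ‖z‖ ≤ R → z ∉ numResolventSet
    intro hz
    rintro ⟨θ, ω, hzH, hsub, hbound⟩
    have heabs : ‖Complex.exp (-(θ : ℂ) * I)‖ = 1 := by
      rw [show -(θ : ℂ) * I = ((-θ : ℝ) : ℂ) * I by push_cast; ring]
      exact Complex.norm_exp_ofReal_mul_I (-θ)
    have hωR : ω < R := by
      have h1 : (Complex.exp (-(θ : ℂ) * I) * z).re ≤ ‖z‖ := by
        refine le_trans (Complex.re_le_norm _) ?_
        rw [norm_mul, heabs, one_mul]
      exact lt_of_lt_of_le hzH (le_trans h1 hz)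
    set a : ℝ := ((p - 1) / p) ^ (1 / p) with hadef
    set b : ℝ := (1 / p) ^ (1 / p) with hbdef
    have ha : 0 < a := Real.rpow_pos_of_pos (div_pos (by linarith) hp0) _
    have hb : 0 < b := Real.rpow_pos_of_pos (by positivity) _
    have hap : a ^ p = (p - 1) / p := by
      rw [hadef, ← Real.rpow_mul (div_nonneg (by linarith) hp0.le),
        one_div_mul_cancel hp0.ne', Real.rpow_one]
    have hbp : b ^ p = 1 / p := by
      rw [hbdef, ← Real.rpow_mul (by positivity), one_div_mul_cancel hp0.ne', Real.rpow_one]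
    have hab : a ^ p + b ^ p = 1 := by
      rw [hap, hbp]
      field_simp
      ring
    have hrab : a ^ (p - 1) * b = R := by
      rw [hadef, ← Real.rpow_mul (div_nonneg (by linarith) hp0.le),
        show 1 / p * (p - 1) = 1 - 1 / p by field_simp, hRdef]
    set x : PiLp (ENNReal.ofReal p) (fun _ : Fin 2 => ℂ) :=
      (WithLp.equiv (ENNReal.ofReal p) (∀ _ : Fin 2, ℂ)).symm
        ![(a : ℂ), Complex.exp ((θ : ℂ) * I) * (b : ℂ)] with hxdef
    have hx0 : x 0 = (a : ℂ) := rfl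
    have hx1 : x 1 = Complex.exp ((θ : ℂ) * I) * (b : ℂ) := rfl
    have hn0 : ‖x 0‖ = a := by
      rw [hx0, Complex.norm_real, Real.norm_of_nonneg ha.le]
    have hn1 : ‖x 1‖ = b := by
      rw [hx1, norm_mul,
        Complex.norm_exp_ofReal_mul_I, one_mul, Complex.norm_real, Real.norm_of_nonneg hb.le]
    have hxnorm : ‖x‖ = 1 := by
      rw [PiLp.norm_eq_sum hptr]
      simp only [htr, Fin.sum_univ_two]
      rw [hn0, hn1, hab, Real.one_rpow]
    set ε : ℝ := (1 + |ω|)⁻¹ with hεdef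
    have hε : 0 < ε := by positivity
    have key : ∀ s ∈ Set.Ioo (0 : ℝ) ε,
        (fun s : ℝ => ((a + s * b) ^ p + b ^ p) ^ (1 / p)) s ≤
          (fun s : ℝ => (1 - ω * s)⁻¹) s := by
      intro s hs
      obtain ⟨hs0, hsε⟩ := hs
      have hsinv : 0 < s⁻¹ := inv_pos.mpr hs0
      have htω : ω < s⁻¹ := by
        have h1 : (1 + |ω|) < s⁻¹ := by
          have h2 : ((1 + |ω|)⁻¹)⁻¹ < s⁻¹ := by
            exact inv_strictAnti₀ hs0 hsε
          rwa [inv_inv] at h2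
        have := le_abs_self ω
        linarith
      have hw1s : 0 < 1 - ω * s := by
        have h3 : ω * s < s⁻¹ * s := mul_lt_mul_of_pos_right htω hs0
        rw [inv_mul_cancel₀ hs0.ne'] at h3
        linarith
      set w : ℂ := Complex.exp ((θ : ℂ) * I) * ((s⁻¹ : ℝ) : ℂ) with hwdef
      have hew : Complex.exp (-(θ : ℂ) * I) * w = ((s⁻¹ : ℝ) : ℂ) := by
        rw [hwdef, ← mul_assoc, ← Complex.exp_add]
        simp
      have hwH : w ∈ halfPlane θ ω := by
        show ω < (Complex.exp (-(θ : ℂ) * I) * w).re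
        rw [hew, Complex.ofReal_re]
        exact htω
      have hw0 : w ≠ 0 :=
        mul_ne_zero (Complex.exp_ne_zero _) (Complex.ofReal_ne_zero.mpr hsinv.ne')
      obtain ⟨hmem, hres, hsolve⟩ := resolvent_formula A hA hw0
      have hbd := hbound w hwH
      rw [hew, Complex.ofReal_re] at hbd
      have hwinv : w⁻¹ = Complex.exp (-(θ : ℂ) * I) * ((s : ℝ) : ℂ) := by
        rw [hwdef, mul_inv, ← Complex.exp_neg]
        push_cast
        rw [inv_inv]
        ring
      set Rx := resolvent A w x with hRxdef
      have hRx0 : Rx 0 = w⁻¹ * ((a : ℂ) + ((s : ℝ) : ℂ) * ((b : ℝ) : ℂ)) := by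
        have hwe : w⁻¹ * Complex.exp ((θ : ℂ) * I) = ((s : ℝ) : ℂ) := by
          rw [hwinv, mul_comm (Complex.exp (-(θ : ℂ) * I)) _, mul_assoc, ← Complex.exp_add]
          simp
        have : Rx 0 = w⁻¹ * x 0 + (w⁻¹ * w⁻¹) * (x 1) := by
          rw [hRxdef, hres]
          simp [(hA x).1, smul_eq_mul]
        rw [this, hx0, hx1]
        linear_combination (w⁻¹ * (b : ℂ)) * hwe
      have hRx1 : Rx 1 = w⁻¹ * (Complex.exp ((θ : ℂ) * I) * (b : ℂ)) := by
        have : Rx 1 = w⁻¹ * x 1 + (w⁻¹ * w⁻¹) * ((0 : ℂ)) := by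
          rw [hRxdef, hres]
          simp [(hA x).2, smul_eq_mul]
        rw [this, hx1]
        ring
      have hnw : ‖w⁻¹‖ = s := by
        rw [norm_inv, hwdef, norm_mul,
          Complex.norm_exp_ofReal_mul_I, one_mul, Complex.norm_real,
          Real.norm_of_nonneg hsinv.le, inv_inv]
      have hnRx0 : ‖Rx 0‖ = s * (a + s * b) := by
        rw [hRx0, norm_mul, hnw]
        congr 1
        rw [show (a : ℂ) + ((s : ℝ) : ℂ) * ((b : ℝ) : ℂ) = (((a + s * b : ℝ)) : ℂ) by push_cast; ring,
          Complex.norm_real, Real.norm_of_nonneg (by positivity)]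
      have hnRx1 : ‖Rx 1‖ = s * b := by
        rw [hRx1, norm_mul, hnw, norm_mul,
          Complex.norm_exp_ofReal_mul_I, one_mul, Complex.norm_real, Real.norm_of_nonneg hb.le]
      have hnRx : ‖Rx‖ = s * ((a + s * b) ^ p + b ^ p) ^ (1 / p) := by
        rw [PiLp.norm_eq_sum hptr]
        simp only [htr, Fin.sum_univ_two]
        rw [hnRx0, hnRx1, Real.mul_rpow hs0.le (by positivity),
          Real.mul_rpow hs0.le hb.le, ← mul_add,
          Real.mul_rpow (by positivity) (by positivity),
          ← Real.rpow_mul hs0.le, mul_one_div, div_self hp0.ne', Real.rpow_one]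
      have hle : s * ((a + s * b) ^ p + b ^ p) ^ (1 / p) ≤ 1 / (s⁻¹ - ω) := by
        calc s * ((a + s * b) ^ p + b ^ p) ^ (1 / p) = ‖Rx‖ := hnRx.symm
          _ ≤ ‖resolvent A w‖ * ‖x‖ := (resolvent A w).le_opNorm x
          _ = ‖resolvent A w‖ := by rw [hxnorm, mul_one]
          _ ≤ 1 / (s⁻¹ - ω) := hbd
      have h4 : (1 - ω * s) * s⁻¹ = s⁻¹ - ω := by field_simp <;> ring
      have hfrac : 1 / (s⁻¹ - ω) = s * (1 - ω * s)⁻¹ := by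
        rw [one_div, ← h4, mul_inv, inv_inv, mul_comm]
      rw [hfrac] at hle
      exact (mul_le_mul_iff_right₀ hs0).mp hle
    have hd1 : HasDerivAt (fun s : ℝ => a + s * b) b 0 := by
      simpa using ((hasDerivAt_id (0 : ℝ)).mul_const b).const_add a
    have hane : a + 0 * b ≠ 0 := by simpa using ha.ne'
    have hd2 := hd1.rpow_const (p := p) (Or.inl hane)
    have hd3 := hd2.add_const (b ^ p)
    have hsum_ne : (a + 0 * b) ^ p + b ^ p ≠ 0 := by
      rw [show a + 0 * b = a by ring, hab]
      exact one_ne_zero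
    have hd4 := hd3.rpow_const (p := 1 / p) (Or.inl hsum_ne)
    have hdf : HasDerivAt (fun s : ℝ => ((a + s * b) ^ p + b ^ p) ^ (1 / p))
        (a ^ (p - 1) * b) 0 := by
      convert hd4 using 1
      rw [show a + 0 * b = a by ring, hab, Real.one_rpow]
      field_simp
    have hg1 : HasDerivAt (fun s : ℝ => 1 - ω * s) (-ω) 0 := by
      simpa using ((hasDerivAt_id (0 : ℝ)).const_mul ω).const_sub 1
    have hg2 := hg1.fun_inv (by norm_num : (1 : ℝ) - ω * 0 ≠ 0)
    have hdg : HasDerivAt (fun s : ℝ => (1 - ω * s)⁻¹) ω 0 := by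
      exact hg2.congr_deriv (by norm_num)
    have h00 : (fun s : ℝ => ((a + s * b) ^ p + b ^ p) ^ (1 / p)) 0 =
        (fun s : ℝ => (1 - ω * s)⁻¹) 0 := by
      show ((a + 0 * b) ^ p + b ^ p) ^ (1 / p) = (1 - ω * 0)⁻¹
      rw [show a + 0 * b = a by ring, hab]
      norm_num
    have hfinal := deriv_le_of_le hε hdf hdg h00 key
    rw [hrab] at hfinal
    linarith
end

section
/- Let X be a complex Banach space and A a bounded linear operator on X. Then the following are equivalent: (a) there exists ε > 0 such that ‖exp(tA)‖ ≤ e^{−tε} for all t ≥ 0; (b) there exists ε > 0 such that Re(j(Ax)) ≤ −ε‖x‖² for all x ∈ X and all j ∈ J(x). -/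
open Complex

variable {X : Type*} [NormedAddCommGroup X] [NormedSpace ℂ X] [CompleteSpace X]

section Aux

open NormedSpace Set Filter Topology

set_option synthInstance.maxHeartbeats 1000000 in
lemma dualitySet_nonempty (x : X) : ∃ j, j ∈ dualitySet x := by
  rcases eq_or_ne x 0 with h | h
  · exact ⟨0, by simp [dualitySet, h]⟩
  · obtain ⟨g, hg1, hgx⟩ := exists_dual_vector ℂ x (norm_ne_zero_iff.mpr h)
    have hgx' : g x = ((‖x‖ : ℝ) : ℂ) := by exact_mod_cast hgx
    refine ⟨(‖x‖ : ℂ) • g, ?_, ?_⟩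
    · simp only [ContinuousLinearMap.smul_apply, hgx', smul_eq_mul]
      push_cast
      ring
    · rw [norm_smul (α := ℂ) (‖x‖ : ℂ) g, hg1, mul_one, Complex.norm_real,
        Real.norm_eq_abs, abs_norm]

lemma hasDerivAt_exp_apply (A : X →L[ℂ] X) (x : X) (t : ℝ) :
    HasDerivAt (fun s : ℝ => NormedSpace.exp (s • A) x)
      (A (NormedSpace.exp (t • A) x)) t := by
  have h : HasDerivAt (fun s : ℝ => NormedSpace.exp (s • A)) (A * NormedSpace.exp (t • A)) t :=
    hasDerivAt_exp_smul_const' A t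
  have h2 := ((ContinuousLinearMap.apply ℂ X x).restrictScalars ℝ).hasFDerivAt.comp_hasDerivAt t h
  simpa [Function.comp_def] using h2

lemma exp_zero_apply (A : X →L[ℂ] X) (x : X) : NormedSpace.exp ((0:ℝ) • A) x = x := by
  simp [NormedSpace.exp_zero]

set_option maxHeartbeats 1000000 in
lemma backward (A : X →L[ℂ] X) (ε : ℝ) (hε : 0 < ε)
    (hd : ∀ x : X, ∀ j ∈ dualitySet x, (j (A x)).re ≤ -ε * ‖x‖ ^ 2)
    (t : ℝ) (ht : 0 ≤ t) : ‖NormedSpace.exp (t • A)‖ ≤ Real.exp (-t * ε) := by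
  apply ContinuousLinearMap.opNorm_le_bound _ (Real.exp_nonneg _)
  intro x
  set u : ℝ → X := fun s => NormedSpace.exp (s • A) x with hu
  have hud : ∀ s : ℝ, HasDerivAt u (A (u s)) s := fun s => hasDerivAt_exp_apply A x s
  have hucont : Continuous u := by
    apply continuous_iff_continuousAt.mpr
    exact fun s => (hud s).continuousAt
  set f : ℝ → ℝ := fun s => ‖u s‖ with hf
  have hfcont : Continuous f := continuous_norm.comp hucont
  have key : ∀ s ∈ Icc 0 t, f s ≤ gronwallBound ‖x‖ (-ε) 0 (s - 0) := by
    apply le_gronwallBound_of_liminf_deriv_right_le (f' := fun s => -ε * f s)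
      hfcont.continuousOn
    · -- the liminf slope condition
      intro s hs r hr
      apply Filter.Eventually.frequently
      -- bound constants on [s, s+1]
      obtain ⟨M, hM⟩ := (isCompact_Icc (a := s) (b := s + 1)).exists_bound_of_continuousOn
        hucont.continuousOn
      set L : ℝ := ‖A‖ * M with hL
      set C : ℝ := ‖A‖ * L with hC
      have hM0 : 0 ≤ M := le_trans (norm_nonneg (u s)) (hM s (by constructor <;> linarith))
      have hL0 : 0 ≤ L := mul_nonneg (norm_nonneg _) hM0
      have hC0 : 0 ≤ C := mul_nonneg (norm_nonneg _) hL0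
      -- Step 1: pointwise slope bound on Ioc s (s+1)
      have step1 : ∀ z ∈ Ioc s (s + 1),
          (z - s)⁻¹ * (f z - f s) ≤ -ε * f z + C * (z - s) := by
        intro z hz
        obtain ⟨hzs, hz1⟩ := hz
        obtain ⟨j, hj⟩ := dualitySet_nonempty (u z)
        have hjn : ‖j‖ = f z := hj.2
        set φ : ℝ → ℝ := fun τ => (j (u τ)).re with hφ
        have hφd : ∀ τ : ℝ, HasDerivAt φ ((j (A (u τ))).re) τ := by
          intro τ
          exact ((Complex.reCLM).comp (j.restrictScalars ℝ)).hasFDerivAt.comp_hasDerivAt τ (hud τ)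
        -- Lipschitz estimate for u on [s, z]
        have hlip : ∀ τ ∈ Icc s z, ‖u τ - u z‖ ≤ L * (z - s) := by
          intro τ hτ
          have hsub : Icc s z ⊆ Icc s (s + 1) := Icc_subset_Icc le_rfl hz1
          have hder : ∀ y ∈ Icc s (s+1), HasDerivWithinAt u (A (u y)) (Icc s (s+1)) y :=
            fun y _ => (hud y).hasDerivWithinAt
          have hbd : ∀ y ∈ Icc s (s+1), ‖A (u y)‖ ≤ L := by
            intro y hy
            exact (A.le_opNorm _).trans (mul_le_mul_of_nonneg_left (hM y hy) (norm_nonneg A))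
          have := (convex_Icc s (s+1)).norm_image_sub_le_of_norm_hasDerivWithin_le
            hder hbd (hsub ⟨le_of_lt hzs, le_rfl⟩) (hsub hτ)
          refine this.trans ?_
          have : ‖τ - z‖ ≤ z - s := by
            rw [Real.norm_eq_abs, abs_sub_comm, _root_.abs_of_nonneg (by linarith [hτ.2] : (0:ℝ) ≤ z - τ)]
            linarith [hτ.1]
          exact mul_le_mul_of_nonneg_left this hL0
        set B : ℝ := f z * (-ε * f z + C * (z - s)) with hB
        -- derivative bound for φ on [s, z]
        have hφ'le : ∀ τ ∈ Icc s z, (j (A (u τ))).re ≤ B := by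
          intro τ hτ
          have e1 : (j (A (u τ))).re = (j (A (u z))).re + (j (A (u τ) - A (u z))).re := by
            have edec : A (u τ) = A (u z) + (A (u τ) - A (u z)) := by abel
            conv_lhs => rw [edec]
            rw [map_add, Complex.add_re]
          have e2 : (j (A (u z))).re ≤ -ε * (f z) ^ 2 := hd (u z) j hj
          have e3 : (j (A (u τ) - A (u z))).re ≤ f z * (C * (z - s)) := by
            refine (Complex.re_le_norm _).trans ?_
            refine (j.le_opNorm _).trans ?_
            rw [hjn, ← map_sub]
            refine mul_le_mul_of_nonneg_left ?_ (norm_nonneg _)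
            refine (A.le_opNorm _).trans ?_
            rw [hC, mul_assoc]
            exact mul_le_mul_of_nonneg_left (hlip τ hτ) (norm_nonneg A)
          rw [e1, hB]
          nlinarith [e2, e3]
        -- one-sided MVT : φ z - φ s ≤ B * (z - s)
        have hmvt : φ z - φ s ≤ B * (z - s) := by
          set g : ℝ → ℝ := fun τ => B * τ - φ τ with hg
          have hgd : ∀ τ : ℝ, HasDerivAt g (B - (j (A (u τ))).re) τ := by
            intro τ
            simpa [hg, Pi.sub_def] using ((hasDerivAt_id τ).const_mul B).sub (hφd τ)
          have hmono : MonotoneOn g (Icc s z) := by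
            apply monotoneOn_of_deriv_nonneg (convex_Icc s z)
            · have hφc : Continuous φ :=
                Complex.continuous_re.comp (j.continuous.comp hucont)
              exact ((continuous_const.mul continuous_id).sub hφc).continuousOn
            · intro τ hτ
              exact ((hgd τ).differentiableAt).differentiableWithinAt
            · intro τ hτ
              rw [(hgd τ).deriv]
              have : τ ∈ Icc s z := interior_subset hτ
              linarith [hφ'le τ this]
          have := hmono ⟨le_rfl, le_of_lt hzs⟩ ⟨le_of_lt hzs, le_rfl⟩ (le_of_lt hzs)
          simp only [hg] at this
          linarith
        have hφz : φ z = (f z) ^ 2 := by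
          rw [hφ]
          simp only
          rw [hj.1, Complex.ofReal_re]
        have hφs : φ s ≤ f z * f s := by
          refine (Complex.re_le_norm _).trans ?_
          refine (j.le_opNorm _).trans ?_
          rw [hjn]
        have hkey : f z * (f z - f s) ≤ f z * ((z - s) * (-ε * f z + C * (z - s))) := by
          nlinarith [hmvt, hφz, hφs]
        rw [inv_mul_le_iff₀ (by linarith : (0:ℝ) < z - s)]
        rcases eq_or_lt_of_le (norm_nonneg (u z)) with hfz | hfz
        · -- f z = 0
          have hfz0 : f z = 0 := hfz.symm
          rw [hfz0]
          have : (0:ℝ) ≤ (z - s) * (C * (z - s)) :=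
            mul_nonneg (by linarith) (mul_nonneg hC0 (by linarith))
          nlinarith [norm_nonneg (u s)]
        · -- f z > 0
          have := le_of_mul_le_mul_left hkey hfz
          linarith [this]
      -- Step 2: the right-hand side tends to -ε * f s < r
      have step2 : Tendsto (fun z => -ε * f z + C * (z - s)) (𝓝[>] s) (𝓝 (-ε * f s)) := by
        have hc : Continuous (fun z => -ε * f z + C * (z - s)) :=
          (continuous_const.mul hfcont).add (continuous_const.mul (continuous_id.sub continuous_const))
        have := (hc.tendsto s).mono_left (nhdsWithin_le_nhds (s := Ioi s))
        simpa using this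
      have step3 : ∀ᶠ z in 𝓝[>] s, -ε * f z + C * (z - s) < r :=
        step2.eventually_lt_const hr
      have step4 : ∀ᶠ z in 𝓝[>] s, z ∈ Ioc s (s + 1) :=
        Ioc_mem_nhdsGT_of_mem ⟨le_rfl, by linarith⟩
      filter_upwards [step3, step4] with z h3 h4
      exact lt_of_le_of_lt (step1 z h4) h3
    · -- f 0 ≤ ‖x‖
      simp [hf, hu, exp_zero_apply]
    · -- bound
      intro s hs
      simp
  have hfin := key t ⟨ht, le_rfl⟩
  rw [sub_zero, gronwallBound_ε0] at hfin
  calc ‖NormedSpace.exp (t • A) x‖ = f t := rfl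
  _ ≤ ‖x‖ * Real.exp (-ε * t) := hfin
  _ = Real.exp (-t * ε) * ‖x‖ := by rw [mul_comm]; ring_nf

lemma forward (A : X →L[ℂ] X) (ε : ℝ) (hε : 0 < ε)
    (hdecay : ∀ t : ℝ, 0 ≤ t → ‖NormedSpace.exp (t • A)‖ ≤ Real.exp (-t * ε))
    (x : X) (j : X →L[ℂ] ℂ) (hj : j ∈ dualitySet x) :
    (j (A x)).re ≤ -ε * ‖x‖ ^ 2 := by
  set u : ℝ → X := fun s => NormedSpace.exp (s • A) x with hu
  set ψ : ℝ → ℝ := fun s => (j (u s)).re with hψ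
  set χ : ℝ → ℝ := fun s => ‖x‖ ^ 2 * Real.exp (-s * ε) with hχ
  have hu0 : u 0 = x := exp_zero_apply A x
  have hψ' : HasDerivAt ψ (j (A x)).re 0 := by
    have h1 : HasDerivAt u (A (u 0)) 0 := hasDerivAt_exp_apply A x 0
    have h2 := ((Complex.reCLM).comp (j.restrictScalars ℝ)).hasFDerivAt.comp_hasDerivAt 0 h1
    rw [hu0] at h2
    exact h2
  have hχ' : HasDerivAt χ (-ε * ‖x‖ ^ 2) 0 := by
    have h1 : HasDerivAt (fun s : ℝ => -s * ε) (-ε) 0 := by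
      simpa using ((hasDerivAt_id (0:ℝ)).neg.mul_const ε)
    have h2 := (h1.exp).const_mul (‖x‖ ^ 2)
    convert h2 using 1
    · rfl
    · rfl
    · rw [neg_zero, zero_mul, Real.exp_zero]; ring
  have hle : ∀ s ∈ Ioi (0:ℝ), ψ s ≤ χ s := by
    intro s hs
    have h1 : (j (u s)).re ≤ ‖j (u s)‖ := Complex.re_le_norm _
    have h2 : ‖j (u s)‖ ≤ ‖j‖ * ‖u s‖ := j.le_opNorm _
    have h3 : ‖u s‖ ≤ ‖NormedSpace.exp (s • A)‖ * ‖x‖ := (NormedSpace.exp (s • A)).le_opNorm x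
    have h4 := hdecay s (le_of_lt hs)
    have hjx : ‖j‖ = ‖x‖ := hj.2
    calc ψ s ≤ ‖j‖ * ‖u s‖ := h1.trans h2
    _ ≤ ‖x‖ * (Real.exp (-s * ε) * ‖x‖) := by
        rw [hjx]
        exact mul_le_mul_of_nonneg_left (h3.trans (mul_le_mul_of_nonneg_right h4 (norm_nonneg x))) (norm_nonneg x)
    _ = χ s := by rw [hχ]; ring
  have hre : (j x).re = ‖x‖ ^ 2 := by rw [hj.1, Complex.ofReal_re]
  have heq : ψ 0 = χ 0 := by simp [hψ, hχ, hu0, hre]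
  -- compare slopes
  have hslope : ∀ s ∈ Ioi (0:ℝ), slope ψ 0 s ≤ slope χ 0 s := by
    intro s hs
    rw [slope_def_field, slope_def_field]
    have hd : ψ s - ψ 0 ≤ χ s - χ 0 := by
      linarith [hle s hs, heq]
    have hs0 : (0:ℝ) < s - 0 := by simpa using hs
    exact div_le_div_of_nonneg_right hd hs0.le
  -- take limits along 𝓝[>] 0
  have l1 : Tendsto (slope ψ 0) (𝓝[>] (0:ℝ)) (𝓝 ((j (A x)).re)) :=
    ((hasDerivAt_iff_tendsto_slope.mp hψ').mono_left
      (nhdsWithin_mono 0 (fun y hy => ne_of_gt hy)))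
  have l2 : Tendsto (slope χ 0) (𝓝[>] (0:ℝ)) (𝓝 (-ε * ‖x‖ ^ 2)) :=
    ((hasDerivAt_iff_tendsto_slope.mp hχ').mono_left
      (nhdsWithin_mono 0 (fun y hy => ne_of_gt hy)))
  exact le_of_tendsto_of_tendsto l1 l2 (eventually_nhdsWithin_of_forall hslope)

end Aux

/-- Uniform exponential contractivity: `‖exp(tA)‖ ≤ e^{-tε}` for all `t ≥ 0` and some
`ε > 0` iff `Re ⟨Ax, j(x)⟩ ≤ -ε ‖x‖²` for all `x` and all `j ∈ J(x)` and some `ε > 0`. -/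
theorem exp_decay_iff_strictly_dissipative (A : X →L[ℂ] X) :
    (∃ ε : ℝ, 0 < ε ∧ ∀ t : ℝ, 0 ≤ t →
        ‖NormedSpace.exp (t • A)‖ ≤ Real.exp (-t * ε)) ↔
      (∃ ε : ℝ, 0 < ε ∧ ∀ x : X, ∀ j ∈ dualitySet x,
        (j (A x)).re ≤ -ε * ‖x‖ ^ 2) := by
  constructor
  · rintro ⟨ε, hε, hdecay⟩
    exact ⟨ε, hε, fun x j hj => forward A ε hε hdecay x j hj⟩
  · rintro ⟨ε, hε, hd⟩
    exact ⟨ε, hε, fun t ht => backward A ε hε hd t ht⟩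
end

section
/- Let Ω be a nonempty locally compact Hausdorff topological space, let q : Ω → ℂ be a bounded continuous function, and let M_q be the bounded multiplication operator on X := C₀(Ω) (the space of continuous functions vanishing at infinity with the sup norm) given by (M_q f)(s) = q(s)·f(s). Then σ_n(M_q) = closure(convexHull(q(Ω))), the closed convex hull of the range of q. -/
open Complex

variable {X : Type*} [NormedAddCommGroup X] [NormedSpace ℂ X] [CompleteSpace X]

open scoped ZeroAtInfty

open Filter Set

theorem mulOp_resolvent {Ω : Type*} [TopologicalSpace Ω] (q : BoundedContinuousFunction Ω ℂ)
    (M : C₀(Ω, ℂ) →L[ℂ] C₀(Ω, ℂ)) (hM : ∀ f : C₀(Ω, ℂ), ∀ s : Ω, M f s = q s * f s)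
    (w : ℂ) (δ : ℝ) (hδ : 0 < δ) (hb : ∀ s, δ ≤ ‖w - q s‖) :
    w ∈ resolventSet ℂ M ∧ ‖resolvent M w‖ ≤ 1 / δ := by
  have hne : ∀ s, w - q s ≠ 0 := fun s => by
    intro h
    have := hb s
    rw [h, norm_zero] at this
    linarith
  -- pointwise inverse as a C₀ map
  have hcont : Continuous fun s => (w - q s)⁻¹ := by
    exact (Continuous.sub continuous_const q.continuous).inv₀ hne
  have hptbd : ∀ (f : C₀(Ω, ℂ)) (s : Ω), ‖(w - q s)⁻¹ * f s‖ ≤ δ⁻¹ * ‖f s‖ := by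
    intro f s
    rw [norm_mul, norm_inv]
    exact mul_le_mul_of_nonneg_right (inv_anti₀ hδ (hb s)) (norm_nonneg _)
  have hzero : ∀ f : C₀(Ω, ℂ),
      Tendsto (fun s => (w - q s)⁻¹ * f s) (cocompact Ω) (nhds 0) := by
    intro f
    apply squeeze_zero_norm (hptbd f)
    have := (zero_at_infty f).norm.const_mul δ⁻¹
    simpa using this
  set Nf : C₀(Ω, ℂ) → C₀(Ω, ℂ) := fun f =>
    ⟨⟨fun s => (w - q s)⁻¹ * f s, hcont.mul f.continuous⟩, hzero f⟩ with hNf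
  have hNapp : ∀ f s, Nf f s = (w - q s)⁻¹ * f s := fun f s => rfl
  have hbdd : ∀ f : C₀(Ω, ℂ), ‖Nf f‖ ≤ δ⁻¹ * ‖f‖ := by
    intro f
    rw [← ZeroAtInftyContinuousMap.norm_toBCF_eq_norm]
    apply BoundedContinuousFunction.norm_le (by positivity) |>.2
    intro s
    exact (hptbd f s).trans (mul_le_mul_of_nonneg_left (f.toBCF.norm_coe_le_norm s)
      (by positivity))
  set N : C₀(Ω, ℂ) →L[ℂ] C₀(Ω, ℂ) := LinearMap.mkContinuous
    { toFun := Nf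
      map_add' := fun f g => by ext s; simp [hNapp]; ring
      map_smul' := fun c f => by ext s; simp [hNapp]; ring } δ⁻¹ hbdd with hN
  have hNapp' : ∀ f s, N f s = (w - q s)⁻¹ * f s := fun f s => rfl
  have hAapp : ∀ f s, (@algebraMap ℂ (C₀(Ω, ℂ) →L[ℂ] C₀(Ω, ℂ)) _ _ ContinuousLinearMap.algebra w - M) f s
      = (w - q s) * f s := by
    intro f s
    rw [Algebra.algebraMap_eq_smul_one]
    simp [ContinuousLinearMap.sub_apply, hM f s]
    ring
  have h1 : (@algebraMap ℂ (C₀(Ω, ℂ) →L[ℂ] C₀(Ω, ℂ)) _ _ ContinuousLinearMap.algebra w - M) * N = 1 := by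
    ext f s
    show (@algebraMap ℂ (C₀(Ω, ℂ) →L[ℂ] C₀(Ω, ℂ)) _ _ ContinuousLinearMap.algebra w - M) (N f) s = f s
    rw [hAapp, hNapp', ← mul_assoc, mul_inv_cancel₀ (hne s), one_mul]
  have h2 : N * (@algebraMap ℂ (C₀(Ω, ℂ) →L[ℂ] C₀(Ω, ℂ)) _ _ ContinuousLinearMap.algebra w - M) = 1 := by
    ext f s
    show N ((@algebraMap ℂ (C₀(Ω, ℂ) →L[ℂ] C₀(Ω, ℂ)) _ _ ContinuousLinearMap.algebra w - M) f) s = f s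
    rw [hNapp', hAapp, ← mul_assoc, inv_mul_cancel₀ (hne s), one_mul]
  set u : (C₀(Ω, ℂ) →L[ℂ] C₀(Ω, ℂ))ˣ :=
    ⟨@algebraMap ℂ (C₀(Ω, ℂ) →L[ℂ] C₀(Ω, ℂ)) _ _ ContinuousLinearMap.algebra w - M, N, h1, h2⟩ with hu
  have hres : resolvent M w = N := by
    show Ring.inverse (@algebraMap ℂ (C₀(Ω, ℂ) →L[ℂ] C₀(Ω, ℂ)) _ _ ContinuousLinearMap.algebra w - M) = N
    have : (u : C₀(Ω, ℂ) →L[ℂ] C₀(Ω, ℂ)) = algebraMap ℂ _ w - M := rfl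
    rw [← this, Ring.inverse_unit]
    rfl
  refine ⟨u.isUnit, ?_⟩
  rw [hres, one_div]
  exact LinearMap.mkContinuous_norm_le _ (by positivity) _


theorem mulOp_range_subset_spectrum {Ω : Type*} [TopologicalSpace Ω] [LocallyCompactSpace Ω] [T2Space Ω] (q : BoundedContinuousFunction Ω ℂ)
    (M : C₀(Ω, ℂ) →L[ℂ] C₀(Ω, ℂ)) (hM : ∀ f : C₀(Ω, ℂ), ∀ s : Ω, M f s = q s * f s)
    (s : Ω) : q s ∈ spectrum ℂ M := by
  -- a C₀ function not vanishing at s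
  obtain ⟨g, hg1, -, hgc, -⟩ := exists_continuous_one_zero_of_isCompact
    (isCompact_singleton : IsCompact {s}) isClosed_empty (disjoint_empty _)
  have hgc' : HasCompactSupport fun t => (g t : ℂ) :=
    hgc.comp_left (g := fun x : ℝ => (x : ℂ)) (by simp)
  set f : C₀(Ω, ℂ) := ⟨⟨fun t => (g t : ℂ), continuous_ofReal.comp g.continuous⟩,
    hgc'.is_zero_at_infty⟩ with hf
  have hfs : f s = 1 := by
    have h1 : g s = 1 := hg1 (mem_singleton s)
    show ((g s : ℂ)) = 1
    rw [h1]; simp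
  intro hu
  obtain ⟨v, hv⟩ := hu
  have happ : (@algebraMap ℂ (C₀(Ω, ℂ) →L[ℂ] C₀(Ω, ℂ)) _ _ ContinuousLinearMap.algebra (q s) - M) (v.inv f) s = f s := by
    have := congrArg (fun A : C₀(Ω, ℂ) →L[ℂ] C₀(Ω, ℂ) => A f s) v.val_inv
    simpa [hv] using this
  rw [Algebra.algebraMap_eq_smul_one] at happ
  simp [ContinuousLinearMap.sub_apply, hM] at happ
  rw [hfs] at happ
  exact one_ne_zero happ.symm


/-- The numerical spectrum of a multiplication operator `M_q` on `C₀(Ω)` is the closed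
convex hull of the range of `q`. -/
theorem numSpectrum_mulOperator_C0 (Ω : Type*) [TopologicalSpace Ω] [LocallyCompactSpace Ω]
    [T2Space Ω] [Nonempty Ω] (q : BoundedContinuousFunction Ω ℂ)
    (M : C₀(Ω, ℂ) →L[ℂ] C₀(Ω, ℂ)) (hM : ∀ f : C₀(Ω, ℂ), ∀ s : Ω, M f s = q s * f s) :
    numSpectrum M = closure (convexHull ℝ (Set.range ⇑q)) := by
  set K := closure (convexHull ℝ (Set.range ⇑q)) with hK
  have habs : ∀ θ : ℝ, ‖Complex.exp (-(θ : ℂ) * Complex.I)‖ = 1 := by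
    intro θ
    rw [Complex.norm_exp]
    norm_num
  apply Set.eq_of_subset_of_subset
  · -- numSpectrum ⊆ K, i.e. Kᶜ ⊆ numResolventSet
    intro z hz
    by_contra hzK
    apply hz
    have hKconv : Convex ℝ K := (convex_convexHull ℝ _).closure
    obtain ⟨φ, u, hφK, hφz⟩ := geometric_hahn_banach_closed_point hKconv isClosed_closure hzK
    set c : ℂ := φ 1 + φ Complex.I * Complex.I with hc
    have hφ : ∀ v : ℂ, φ v = ((starRingEnd ℂ) c * v).re := by
      intro v
      have h1 : ((starRingEnd ℂ) c * v).re = (φ 1) * v.re + (φ I) * v.im := by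
        simp [hc, Complex.mul_re]
        try ring
      have hv : v = v.re • (1 : ℂ) + v.im • Complex.I := by
        simp [Complex.real_smul]
        try exact (Complex.re_add_im v).symm
      rw [h1]
      conv_lhs => rw [hv]
      rw [map_add, map_smul, map_smul]
      simp [smul_eq_mul]
      ring
    have hc0 : c ≠ 0 := by
      intro h
      have h0 : ∀ v : ℂ, φ v = 0 := by intro v; rw [hφ, h]; simp
      obtain ⟨s⟩ := ‹Nonempty Ω›
      have hqs : q s ∈ K := subset_closure (subset_convexHull ℝ _ ⟨s, rfl⟩)
      have h1 := hφK _ hqs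
      rw [h0] at h1
      rw [h0] at hφz
      linarith
    set θ := Complex.arg c with hθ
    set r := ‖c‖ with hr
    have hrpos : 0 < r := norm_pos_iff.mpr hc0
    have hcc : (starRingEnd ℂ) c = (r : ℂ) * Complex.exp (-(θ : ℂ) * Complex.I) := by
      conv_lhs => rw [← Complex.norm_mul_exp_arg_mul_I c]
      rw [map_mul, Complex.conj_ofReal, ← Complex.exp_conj]
      congr 2
      simp
      try ring
    have hre : ∀ v : ℂ, (Complex.exp (-(θ : ℂ) * Complex.I) * v).re = φ v / r := by
      intro v
      rw [hφ v, hcc, mul_assoc, Complex.re_ofReal_mul]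
      field_simp
    have hzH : z ∈ halfPlane θ (u / r) := by
      show u / r < _
      rw [hre]
      gcongr
    have key : ∀ w ∈ halfPlane θ (u / r), w ∈ resolventSet ℂ M ∧
        ‖resolvent M w‖ ≤ 1 / ((Complex.exp (-(θ : ℂ) * Complex.I) * w).re - u / r) := by
      intro w hw
      have hδpos : 0 < (Complex.exp (-(θ : ℂ) * Complex.I) * w).re - u / r :=
        sub_pos.2 hw
      apply mulOp_resolvent q M hM w _ hδpos
      intro s
      have hqs : (Complex.exp (-(θ : ℂ) * Complex.I) * (q s)).re ≤ u / r := by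
        rw [hre]
        have hlt : φ (q s) < u := hφK _ (subset_closure (subset_convexHull ℝ _ ⟨s, rfl⟩))
        gcongr
        try exact hlt.le
      calc (Complex.exp (-(θ : ℂ) * Complex.I) * w).re - u / r
          ≤ (Complex.exp (-(θ : ℂ) * Complex.I) * (w - q s)).re := by
            rw [mul_sub, Complex.sub_re]; linarith
        _ ≤ ‖Complex.exp (-(θ : ℂ) * Complex.I) * (w - q s)‖ :=
            Complex.re_le_norm _
        _ = ‖w - q s‖ := by rw [norm_mul, habs θ, one_mul]
    exact ⟨θ, u / r, hzH, fun w hw => (key w hw).1, fun w hw => (key w hw).2⟩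
  · -- K ⊆ numSpectrum
    intro z hzK hzres
    obtain ⟨θ, ω, hzH, hHres, -⟩ := hzres
    set e := Complex.exp (-(θ : ℂ) * Complex.I) with he
    have hC : K ⊆ {v : ℂ | (e * v).re ≤ ω} := by
      apply closure_minimal
      apply convexHull_min
      · rintro - ⟨s, rfl⟩
        by_contra hlt
        rw [Set.mem_setOf_eq, not_le] at hlt
        have : q s ∈ resolventSet ℂ M := hHres hlt
        exact (mulOp_range_subset_spectrum q M hM s) this
      · exact convex_halfSpace_le
          ⟨fun a b => by rw [mul_add, Complex.add_re], fun cr v => by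
            simp only [smul_eq_mul, Complex.real_smul]
            rw [mul_left_comm, Complex.re_ofReal_mul]⟩ ω
      · exact IsClosed.preimage (Complex.continuous_re.comp (continuous_mul_left e))
          isClosed_Iic
    have := hC hzK
    rw [halfPlane, Set.mem_setOf_eq] at hzH
    exact not_lt.2 this hzH
end
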